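/- Let l : {1,2,3,…} → ℝ be a function satisfying (1) l(a·b) = l(a) + l(b) for all positive integers a, b, and (2) l(n+1) − l(n) → 0 as n → ∞. Then there exists a real constant c such that l(n) = c·ln n for all positive integers n. -/

import Mathlib

open Filter Topology

/-- Key lemma: a completely additive function with `f 2 = 0` and vanishing
increments is identically zero on positive integers. -/
lemma key_zero (f : ℕ → ℝ)
    (h_add : ∀ a b : ℕ, 0 < a → 0 < b → f (a * b) = f a + f b)
    (h2 : f 2 = 0)
    (h_lim : Tendsto (fun n : ℕ => f (n + 1) - f n) atTop (nhds 0)) :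
    ∀ m : ℕ, 0 < m → f m = 0 := by
  have hf1 : f 1 = 0 := by
    have := h_add 1 1 one_pos one_pos
    simp at this; linarith
  -- f (2*m) = f m
  have hdouble : ∀ m : ℕ, 0 < m → f (2 * m) = f m := by
    intro m hm
    rw [h_add 2 m two_pos hm, h2, zero_add]
  -- f (m^k) = k * f m
  have hpow : ∀ m : ℕ, 0 < m → ∀ k : ℕ, f (m ^ k) = k * f m := by
    intro m hm k
    induction k with
    | zero => simpa using hf1
    | succ k ih =>
      rw [pow_succ, h_add _ m (pow_pos hm k) hm, ih]
      push_cast; ring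
  -- main estimate: for each ε>0 there is B ≥ 0 with |f n| ≤ B + ε * log₂ n
  have main : ∀ ε : ℝ, 0 < ε → ∃ B : ℝ, 0 ≤ B ∧
      ∀ n : ℕ, 0 < n → |f n| ≤ B + ε * (Nat.log 2 n : ℝ) := by
    intro ε hε
    obtain ⟨N₀, hN₀⟩ := (Metric.tendsto_atTop.1 h_lim ε hε)
    set N := N₀ + 2 with hN
    have hN2 : 2 ≤ N := by omega
    have hNest : ∀ n : ℕ, N ≤ n → |f (n + 1) - f n| ≤ ε := by
      intro n hn
      have := hN₀ n (by omega)
      rw [Real.dist_eq, sub_zero] at this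
      exact this.le
    set B : ℝ := ∑ i ∈ Finset.range (2 * N), |f i| with hB
    have hBnonneg : 0 ≤ B := Finset.sum_nonneg fun i _ => abs_nonneg _
    have hBsmall : ∀ n : ℕ, n < 2 * N → |f n| ≤ B := by
      intro n hn
      exact Finset.single_le_sum (f := fun i => |f i|) (fun i _ => abs_nonneg _)
        (Finset.mem_range.2 hn)
    refine ⟨B, hBnonneg, ?_⟩
    intro n
    induction n using Nat.strong_induction_on with
    | _ n ih =>
      intro hn
      by_cases hcase : n < 2 * N
      · have : (0:ℝ) ≤ ε * (Nat.log 2 n : ℝ) :=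
          mul_nonneg hε.le (Nat.cast_nonneg _)
        linarith [hBsmall n hcase]
      · push_neg at hcase
        have hn2 : 2 ≤ n := by omega
        have hm_pos : 0 < n / 2 := Nat.div_pos (by omega) two_pos
        have hm_lt : n / 2 < n := Nat.div_lt_self (by omega) one_lt_two
        have hmN : N ≤ n / 2 := by omega
        -- |f n - f (n/2)| ≤ ε
        have hstep : |f n - f (n / 2)| ≤ ε := by
          rcases Nat.even_or_odd n with ⟨m, hmeq⟩ | ⟨m, hmeq⟩
          · have hm : n / 2 = m := by omega
            have hmpos : 0 < m := by omega
            rw [hm, hmeq]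
            have : f (m + m) = f m := by
              have := hdouble m hmpos; rwa [two_mul] at this
            rw [this, sub_self, abs_zero]; exact hε.le
          · have hm : n / 2 = m := by omega
            have hmpos : 0 < m := by omega
            have h2m : f (2 * m) = f m := hdouble m hmpos
            have : f n - f (n / 2) = f (2 * m + 1) - f (2 * m) := by
              rw [hm, hmeq, h2m]
            rw [this]
            exact hNest (2 * m) (by omega)
        have hlog : (Nat.log 2 (n / 2) : ℝ) + 1 = (Nat.log 2 n : ℝ) := by
          have h1 : Nat.log 2 (n / 2) = Nat.log 2 n - 1 := Nat.log_div_base 2 n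
          have h2' : 1 ≤ Nat.log 2 n := Nat.log_pos one_lt_two hn2
          rw [h1]
          push_cast [Nat.cast_sub h2']
          ring
        have ihm := ih (n / 2) hm_lt hm_pos
        calc |f n| = |f (n / 2) + (f n - f (n / 2))| := by ring_nf
          _ ≤ |f (n / 2)| + |f n - f (n / 2)| := abs_add_le _ _
          _ ≤ (B + ε * (Nat.log 2 (n / 2) : ℝ)) + ε := by linarith
          _ = B + ε * ((Nat.log 2 (n / 2) : ℝ) + 1) := by ring
          _ = B + ε * (Nat.log 2 n : ℝ) := by rw [hlog]
  -- now conclude f m = 0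
  intro m hm
  have habs : ∀ ε : ℝ, 0 < ε → |f m| ≤ ε * (Real.log m / Real.log 2) := by
    intro ε hε
    obtain ⟨B, hB0, hB⟩ := main ε hε
    have hk : ∀ k : ℕ, 0 < k → |f m| ≤ B / k + ε * (Real.log m / Real.log 2) := by
      intro k hk
      have hmk : 0 < m ^ k := pow_pos hm k
      have h1 := hB (m ^ k) hmk
      rw [hpow m hm k, abs_mul, Nat.abs_cast] at h1
      have hlogb : (Nat.log 2 (m ^ k) : ℝ) ≤ Real.logb 2 (m ^ k) := by
        simpa using Real.natLog_le_logb (m ^ k) 2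
      have hlogb2 : Real.logb 2 ((m : ℝ) ^ k) = k * (Real.log m / Real.log 2) := by
        rw [Real.logb, Real.log_pow]; ring
      have h2 : (k : ℝ) * |f m| ≤ B + ε * ((k : ℝ) * (Real.log m / Real.log 2)) := by
        calc (k : ℝ) * |f m| ≤ B + ε * (Nat.log 2 (m ^ k) : ℝ) := h1
          _ ≤ B + ε * ((k : ℝ) * (Real.log m / Real.log 2)) := by
              rw [← hlogb2]; nlinarith
      have hkpos : (0:ℝ) < k := by exact_mod_cast hk
      rw [← mul_le_mul_iff_right₀ hkpos, mul_add, mul_div_cancel₀ _ (ne_of_gt hkpos)]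
      have h3 : ε * ((k : ℝ) * (Real.log m / Real.log 2))
          = (k : ℝ) * (ε * (Real.log m / Real.log 2)) := by ring
      linarith
    have htend : Tendsto (fun k : ℕ => B / k + ε * (Real.log m / Real.log 2)) atTop
        (nhds (0 + ε * (Real.log m / Real.log 2))) := by
      apply Tendsto.add_const
      simpa using (tendsto_const_nhds (x := B)).div_atTop tendsto_natCast_atTop_atTop
    rw [zero_add] at htend
    exact ge_of_tendsto htend (eventually_atTop.2 ⟨1, fun k hk1 => hk k hk1⟩)
  -- |f m| ≤ ε * C for all ε > 0, with C ≥ 0, hence f m = 0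
  have hC : 0 ≤ Real.log m / Real.log 2 := by
    apply div_nonneg
    · exact Real.log_natCast_nonneg m
    · exact (Real.log_pos one_lt_two).le
  have : |f m| ≤ 0 := by
    apply le_of_forall_pos_le_add
    intro η hη
    set C := Real.log m / Real.log 2
    have hε : 0 < η / (C + 1) := by positivity
    have := habs _ hε
    rw [zero_add]
    calc |f m| ≤ η / (C + 1) * C := this
      _ ≤ η := by rw [div_mul_eq_mul_div, div_le_iff₀ (by positivity)]; nlinarith
  have := abs_nonneg (f m)
  have : |f m| = 0 := le_antisymm ‹_› ‹_›
  exact abs_eq_zero.mp this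

lemma log_diff_tendsto : Tendsto (fun n : ℕ => Real.log (n + 1) - Real.log n) atTop (nhds 0) := by
  have h1 : Tendsto (fun n : ℕ => 1 + 1 / (n : ℝ)) atTop (nhds 1) := by
    simpa using (tendsto_const_nhds (x := (1:ℝ))).add tendsto_one_div_atTop_nhds_zero_nat
  have h2 : Tendsto (fun n : ℕ => Real.log (1 + 1 / (n : ℝ))) atTop (nhds 0) := by
    have := (Real.continuousAt_log one_ne_zero).tendsto.comp h1
    simpa [Function.comp_def] using this
  apply h2.congr'
  filter_upwards [eventually_gt_atTop 0] with n hn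
  have hn' : (0:ℝ) < n := by exact_mod_cast hn
  rw [← Real.log_div (by positivity) (ne_of_gt hn')]
  congr 1
  field_simp

theorem completely_additive_of_small_increments
    (l : ℕ → ℝ)
    (h_add : ∀ a b : ℕ, 0 < a → 0 < b → l (a * b) = l a + l b)
    (h_lim : Tendsto (fun n : ℕ => l (n + 1) - l n) atTop (nhds 0)) :
    ∃ c : ℝ, ∀ n : ℕ, 0 < n → l n = c * Real.log n := by
  have h2ne : Real.log 2 ≠ 0 := ne_of_gt (Real.log_pos one_lt_two)
  set c := l 2 / Real.log 2 with hc
  refine ⟨c, ?_⟩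
  have key := key_zero (fun n => l n - c * Real.log n) ?_ ?_ ?_
  · intro n hn
    have h := key n hn
    linarith
  · intro a b ha hb
    have hlog : Real.log ((a * b : ℕ) : ℝ) = Real.log a + Real.log b := by
      push_cast
      exact Real.log_mul (by exact_mod_cast ha.ne') (by exact_mod_cast hb.ne')
    rw [h_add a b ha hb, hlog]
    ring
  · show l 2 - c * Real.log ((2:ℕ):ℝ) = 0
    rw [hc]
    push_cast
    field_simp
    ring
  · have h0 : Tendsto (fun n : ℕ => (l (n + 1) - l n) - c * (Real.log (n + 1) - Real.log n))
        atTop (nhds (0 - c * 0)) := h_lim.sub (log_diff_tendsto.const_mul c)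
    rw [mul_zero, sub_zero] at h0
    apply h0.congr
    intro n
    push_cast
    ring
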